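/- Let v ∈ S_n avoid 1324 and suppose Γ([v,w₀]) is a Young diagram λ (in English notation). Then the complement μ = n^n/λ has exactly ℓ(v) boxes; explicitly, the map sending an inversion ⟨a,b⟩ of v to the box in row b and column v(a) is a bijection between inversions of v and boxes of μ. -/

import Mathlib

open Equiv Finset
open scoped Classical

/-- Bruhat order on the symmetric group on `Fin n`, via the rank-matrix
characterization: `v ≤ w` iff every northeast corner count of `v` is at most
that of `w`. -/
def bruhatLE {n : ℕ} (v w : Equiv.Perm (Fin n)) : Prop :=
  ∀ i j : Fin n,
    (Finset.univ.filter fun k => k ≤ i ∧ j ≤ v k).card ≤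
      (Finset.univ.filter fun k => k ≤ i ∧ j ≤ w k).card

/-- Coxeter length = number of inversions. -/
def len {n : ℕ} (v : Equiv.Perm (Fin n)) : ℕ :=
  (Finset.univ.filter fun p : Fin n × Fin n => p.1 < p.2 ∧ v p.2 < v p.1).card

/-- The graph of the Bruhat interval `[v, w]`. -/
def grInt {n : ℕ} (v w : Equiv.Perm (Fin n)) : Set (Fin n × Fin n) :=
  {p | ∃ u : Equiv.Perm (Fin n), bruhatLE v u ∧ bruhatLE u w ∧ u p.1 = p.2}

def avoids1324 {n : ℕ} (v : Equiv.Perm (Fin n)) : Prop :=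
  ¬ ∃ a b c d : Fin n, a < b ∧ b < c ∧ c < d ∧ v a < v c ∧ v c < v b ∧ v b < v d

section Aux

variable {n : ℕ}

lemma bruhatLE_refl (v : Perm (Fin n)) : bruhatLE v v := fun _ _ => le_rfl

lemma bruhatLE_trans {u v w : Perm (Fin n)} (h1 : bruhatLE u v) (h2 : bruhatLE v w) :
    bruhatLE u w := fun i j => (h1 i j).trans (h2 i j)

lemma card_filter_ge (v : Perm (Fin n)) (c : Fin n) :
    (Finset.univ.filter fun k => c ≤ v k).card = n - (c : ℕ) := by
  have himg : (Finset.univ.filter fun k => c ≤ v k).image v = Finset.Ici c := by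
    ext x
    simp only [Finset.mem_image, Finset.mem_filter, Finset.mem_univ, true_and, Finset.mem_Ici]
    constructor
    · rintro ⟨k, hk, rfl⟩; exact hk
    · intro hx; exact ⟨v.symm x, by simpa using hx, by simp⟩
  calc (Finset.univ.filter fun k => c ≤ v k).card
      = ((Finset.univ.filter fun k => c ≤ v k).image v).card :=
        (Finset.card_image_of_injective _ v.injective).symm
    _ = (Finset.Ici c).card := by rw [himg]
    _ = n - (c : ℕ) := by simp

lemma bruhatLE_revPerm (u : Perm (Fin n)) : bruhatLE u Fin.revPerm := by
  intro i j
  have hR : (Finset.univ.filter fun k => k ≤ i ∧ j ≤ Fin.revPerm k)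
      = Finset.Iic (min i j.rev) := by
    ext k
    simp only [Finset.mem_filter, Finset.mem_univ, true_and, Finset.mem_Iic, le_min_iff,
      Fin.revPerm_apply]
    constructor
    · rintro ⟨h1, h2⟩; exact ⟨h1, Fin.le_rev_iff.mp h2⟩
    · rintro ⟨h1, h2⟩; exact ⟨h1, Fin.le_rev_iff.mpr h2⟩
  have h1 : (Finset.univ.filter fun k => k ≤ i ∧ j ≤ u k) ⊆ Finset.Iic i := by
    intro k hk
    simp only [Finset.mem_filter, Finset.mem_univ, true_and] at hk
    exact Finset.mem_Iic.mpr hk.1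
  have h2 : (Finset.univ.filter fun k => k ≤ i ∧ j ≤ u k) ⊆
      Finset.univ.filter fun k => j ≤ u k := by
    intro k hk
    simp only [Finset.mem_filter, Finset.mem_univ, true_and] at hk ⊢
    exact hk.2
  have hc1 := Finset.card_le_card h1
  have hc2 := Finset.card_le_card h2
  rw [Fin.card_Iic] at hc1
  rw [card_filter_ge] at hc2
  rw [hR, Fin.card_Iic]
  have hmin : ((min i j.rev : Fin n) : ℕ) = min (i : ℕ) ((j.rev : Fin n) : ℕ) := by
    rcases le_total i j.rev with h | h
    · rw [min_eq_left h, min_eq_left (Fin.le_def.mp h)]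
    · rw [min_eq_right h, min_eq_right (Fin.le_def.mp h)]
  have hrev : ((j.rev : Fin n) : ℕ) = n - ((j : ℕ) + 1) := Fin.val_rev j
  have hj : (j : ℕ) < n := j.isLt
  omega

lemma bruhatLE_mul_swap (v : Perm (Fin n)) {a b : Fin n} (hab : a < b) (hv : v a < v b) :
    bruhatLE v (v * Equiv.swap a b) := by
  intro i j
  by_cases hbi : b ≤ i
  · apply Finset.card_le_card_of_injOn (Equiv.swap a b)
    · intro k hk
      simp only [Finset.mem_coe, Finset.mem_filter, Finset.mem_univ, true_and] at hk ⊢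
      constructor
      · rcases eq_or_ne k a with rfl | hka
        · rw [Equiv.swap_apply_left]; exact hbi
        rcases eq_or_ne k b with rfl | hkb
        · rw [Equiv.swap_apply_right]; exact (hab.le.trans hbi)
        · rw [Equiv.swap_apply_of_ne_of_ne hka hkb]; exact hk.1
      · rw [Equiv.Perm.mul_apply, Equiv.swap_apply_self]
        exact hk.2
    · exact fun x _ y _ h => (Equiv.swap a b).injective h
  · apply Finset.card_le_card
    intro k hk
    simp only [Finset.mem_filter, Finset.mem_univ, true_and] at hk ⊢
    obtain ⟨hki, hjk⟩ := hk
    have hkb : k ≠ b := fun h => hbi (h ▸ hki)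
    refine ⟨hki, ?_⟩
    rcases eq_or_ne k a with rfl | hka
    · rw [Equiv.Perm.mul_apply, Equiv.swap_apply_left]
      exact hjk.trans hv.le
    · rw [Equiv.Perm.mul_apply, Equiv.swap_apply_of_ne_of_ne hka hkb]
      exact hjk

lemma exists_le_of_bruhatLE {v u : Perm (Fin n)} (h : bruhatLE v u) (i c : Fin n)
    (hc : u i = c) : ∃ k, k ≤ i ∧ v k ≤ c := by
  by_contra hcon
  push_neg at hcon
  rcases Nat.lt_or_ge ((c : ℕ) + 1) n with hn | hn
  · set j : Fin n := ⟨(c : ℕ) + 1, hn⟩ with hjdef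
    have hfull : (Finset.univ.filter fun k => k ≤ i ∧ j ≤ v k) = Finset.Iic i := by
      ext k
      simp only [Finset.mem_filter, Finset.mem_univ, true_and, Finset.mem_Iic]
      constructor
      · exact fun hk => hk.1
      · intro hk
        refine ⟨hk, ?_⟩
        have := hcon k hk
        rw [Fin.lt_def] at this
        rw [Fin.le_def]
        exact this
    have hsub : (Finset.univ.filter fun k => k ≤ i ∧ j ≤ u k) ⊆ Finset.Iio i := by
      intro k hk
      simp only [Finset.mem_filter, Finset.mem_univ, true_and] at hk
      rw [Finset.mem_Iio]
      rcases hk.1.lt_or_eq with hlt | rfl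
      · exact hlt
      · exfalso
        have h2 := hk.2
        rw [hc, Fin.le_def] at h2
        simp [hjdef] at h2
    have hle := h i j
    have hle2 := Finset.card_le_card hsub
    rw [hfull, Fin.card_Iic] at hle
    rw [Fin.card_Iio] at hle2
    omega
  · have h2 := hcon i le_rfl
    have h3 := (v i).isLt
    rw [Fin.lt_def] at h2
    omega

lemma exists_ge_of_bruhatLE {v u : Perm (Fin n)} (h : bruhatLE v u) (i c : Fin n)
    (hc : u i = c) : ∃ k, i ≤ k ∧ c ≤ v k := by
  by_contra hcon
  push_neg at hcon
  rcases Nat.eq_zero_or_pos (i : ℕ) with hi | hi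
  · have h2 := hcon (v.symm c) (by rw [Fin.le_def, hi]; exact Nat.zero_le _)
    simp at h2
  · set a : Fin n := ⟨(i : ℕ) - 1, by omega⟩ with hadef
    have hai : ∀ k : Fin n, k ≤ a ↔ k < i := by
      intro k
      rw [Fin.le_def, Fin.lt_def]
      simp only [hadef]
      omega
    have hLfull : (Finset.univ.filter fun k => k ≤ a ∧ c ≤ v k)
        = Finset.univ.filter fun k => c ≤ v k := by
      ext k
      simp only [Finset.mem_filter, Finset.mem_univ, true_and]
      constructor
      · exact fun hk => hk.2
      · intro hck
        refine ⟨(hai k).mpr ?_, hck⟩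
        by_contra hik
        push_neg at hik
        exact absurd hck (not_le.mpr (hcon k hik))
    have hmemi : i ∈ Finset.univ.filter fun k => c ≤ u k := by
      simp [hc]
    have hRsub : (Finset.univ.filter fun k => k ≤ a ∧ c ≤ u k) ⊆
        (Finset.univ.filter fun k => c ≤ u k).erase i := by
      intro k hk
      simp only [Finset.mem_filter, Finset.mem_univ, true_and] at hk
      rw [Finset.mem_erase]
      exact ⟨ne_of_lt ((hai k).mp hk.1), by simp [hk.2]⟩
    have hle := (h a c).trans (Finset.card_le_card hRsub)
    rw [hLfull, card_filter_ge, Finset.card_erase_of_mem hmemi, card_filter_ge] at hle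
    have hcn : (c : ℕ) < n := c.isLt
    omega

lemma exists_mid (v : Perm (Fin n)) (i c : Fin n)
    (h1 : ∃ k, k ≤ i ∧ v k ≤ c) (h2 : ∃ k, i ≤ k ∧ c ≤ v k) :
    ∃ u, bruhatLE v u ∧ u i = c := by
  have hvj : v (v.symm c) = c := v.apply_symm_apply c
  rcases lt_trichotomy (v i) c with hvc | hvc | hvc
  · have hij : v.symm c ≠ i := fun h => (ne_of_lt hvc) (by rw [← h]; exact hvj)
    rcases lt_or_gt_of_ne hij with hji | hji
    · obtain ⟨k, hik, hck⟩ := h2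
      have hik' : i < k := lt_of_le_of_ne hik (fun h => (not_lt.mpr (h ▸ hck)) hvc)
      have hjk : v.symm c ≠ k := ne_of_lt (hji.trans hik')
      have hck' : c < v k := lt_of_le_of_ne hck
        (fun h => hjk (v.injective (by rw [hvj, ← h])))
      refine ⟨(v * Equiv.swap i k) * Equiv.swap (v.symm c) i, ?_, ?_⟩
      · refine bruhatLE_trans (bruhatLE_mul_swap v hik' (hvc.trans hck')) ?_
        apply bruhatLE_mul_swap
        · exact hji
        · rw [Equiv.Perm.mul_apply, Equiv.Perm.mul_apply,
            Equiv.swap_apply_of_ne_of_ne hij hjk, Equiv.swap_apply_left, hvj]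
          exact hck'
      · rw [Equiv.Perm.mul_apply, Equiv.swap_apply_right, Equiv.Perm.mul_apply,
          Equiv.swap_apply_of_ne_of_ne hij hjk, Equiv.apply_symm_apply]
    · refine ⟨v * Equiv.swap i (v.symm c), ?_, ?_⟩
      · exact bruhatLE_mul_swap v hji (by rw [hvj]; exact hvc)
      · rw [Equiv.Perm.mul_apply, Equiv.swap_apply_left, Equiv.apply_symm_apply]
  · exact ⟨v, bruhatLE_refl v, hvc⟩
  · have hij : v.symm c ≠ i := fun h => (ne_of_gt hvc) (by rw [← h]; exact hvj)
    rcases lt_or_gt_of_ne hij with hji | hji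
    · refine ⟨v * Equiv.swap (v.symm c) i, ?_, ?_⟩
      · exact bruhatLE_mul_swap v hji (by rw [hvj]; exact hvc)
      · rw [Equiv.Perm.mul_apply, Equiv.swap_apply_right, Equiv.apply_symm_apply]
    · obtain ⟨k, hki, hvk⟩ := h1
      have hki' : k < i := lt_of_le_of_ne hki (fun h => (not_lt.mpr (h ▸ hvk)) hvc)
      have hjk : k ≠ v.symm c := ne_of_lt (hki'.trans hji)
      have hvk' : v k < c := lt_of_le_of_ne hvk
        (fun h => hjk (v.injective (h.trans hvj.symm)))
      refine ⟨(v * Equiv.swap k i) * Equiv.swap i (v.symm c), ?_, ?_⟩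
      · refine bruhatLE_trans (bruhatLE_mul_swap v hki' (hvk'.trans hvc)) ?_
        apply bruhatLE_mul_swap
        · exact hji
        · rw [Equiv.Perm.mul_apply, Equiv.Perm.mul_apply, Equiv.swap_apply_right,
            Equiv.swap_apply_of_ne_of_ne (Ne.symm hjk) (ne_of_gt hji), hvj]
          exact hvk'
      · rw [Equiv.Perm.mul_apply, Equiv.swap_apply_left, Equiv.Perm.mul_apply,
          Equiv.swap_apply_of_ne_of_ne (Ne.symm hjk) (ne_of_gt hji), Equiv.apply_symm_apply]

lemma mem_grInt_iff (v : Perm (Fin n)) (p : Fin n × Fin n) :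
    p ∈ grInt v Fin.revPerm ↔
      (∃ k, k ≤ p.1 ∧ v k ≤ p.2) ∧ (∃ k, p.1 ≤ k ∧ p.2 ≤ v k) := by
  constructor
  · rintro ⟨u, hvu, -, hup⟩
    exact ⟨exists_le_of_bruhatLE hvu p.1 p.2 hup, exists_ge_of_bruhatLE hvu p.1 p.2 hup⟩
  · rintro ⟨h1, h2⟩
    obtain ⟨u, hvu, hui⟩ := exists_mid v p.1 p.2 h1 h2
    exact ⟨u, hvu, bruhatLE_revPerm u, hui⟩

end Aux

/-- When `v` avoids 1324 and `Γ([v, w₀])` is a Young diagram `λ`, the map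
sending an inversion `⟨a, b⟩` of `v` to the box in row `b`, column `v(a)` is a
bijection onto the complement `μ = n^n/λ`; in particular `|μ| = ℓ(v)`. -/
theorem complement_boxes_eq_inversions {n : ℕ} (v : Equiv.Perm (Fin n))
    (h1 : avoids1324 v) (lam : Fin n → ℕ) (hanti : Antitone lam)
    (hgr : ∀ p : Fin n × Fin n,
      p ∈ grInt v Fin.revPerm ↔ (p.2 : ℕ) < lam p.1) :
    Set.BijOn (fun p : Fin n × Fin n => (p.2, v p.1))
        {p : Fin n × Fin n | p.1 < p.2 ∧ v p.2 < v p.1}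
        {q : Fin n × Fin n | q ∉ grInt v Fin.revPerm} ∧
      (Finset.univ.filter
        fun q : Fin n × Fin n => q ∉ grInt v Fin.revPerm).card = len v := by
  have hgraph : ∀ k : Fin n, (k, v k) ∈ grInt v Fin.revPerm := fun k =>
    (mem_grInt_iff v _).mpr ⟨⟨k, le_rfl, le_rfl⟩, ⟨k, le_rfl, le_rfl⟩⟩
  have hlamv : ∀ k : Fin n, (v k : ℕ) < lam k := fun k => (hgr (k, v k)).mp (hgraph k)
  have hnotmem : ∀ r c : Fin n, (r, c) ∉ grInt v Fin.revPerm → v r < c := by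
    intro r c hrc
    have hnl : ¬ ((c : ℕ) < lam r) := fun h => hrc ((hgr (r, c)).mpr h)
    have h2 := hlamv r
    rw [Fin.lt_def]
    omega
  have hmaps : ∀ a b : Fin n, a < b → v b < v a → (b, v a) ∉ grInt v Fin.revPerm := by
    intro a b hab hvab hmem
    obtain ⟨-, k, hbk, hak⟩ := (mem_grInt_iff v _).mp hmem
    have hbk' : b < k := lt_of_le_of_ne hbk (fun h => (not_le.mpr hvab) (h ▸ hak))
    have hak' : v a < v k := lt_of_le_of_ne hak
      (fun h => absurd (v.injective h) (ne_of_lt (hab.trans hbk')))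
    have hmem2 : ((a, v b) : Fin n × Fin n) ∈ grInt v Fin.revPerm := by
      apply (hgr _).mpr
      exact lt_trans (Fin.lt_def.mp hvab) (hlamv a)
    obtain ⟨⟨p, hpa, hpb⟩, -⟩ := (mem_grInt_iff v _).mp hmem2
    have hpa' : p < a := lt_of_le_of_ne hpa (fun h => (not_le.mpr hvab) (h ▸ hpb))
    have hpb' : v p < v b := lt_of_le_of_ne hpb
      (fun h => absurd (v.injective h) (ne_of_lt (hpa'.trans hab)))
    exact h1 ⟨p, a, b, k, hpa', hab, hbk', hpb', hvab, hak'⟩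
  have hsurj : ∀ r c : Fin n, (r, c) ∉ grInt v Fin.revPerm →
      v.symm c < r ∧ v r < c := by
    intro r c hrc
    have hvr : v r < c := hnotmem r c hrc
    have hnc : ¬ (∃ k, r ≤ k ∧ c ≤ v k) := by
      intro h2
      exact hrc ((mem_grInt_iff v _).mpr ⟨⟨r, le_rfl, hvr.le⟩, h2⟩)
    have hvs : ¬ (r ≤ v.symm c) := fun h => hnc ⟨v.symm c, h, by simp⟩
    exact ⟨not_le.mp hvs, hvr⟩
  have hbij : Set.BijOn (fun p : Fin n × Fin n => (p.2, v p.1))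
      {p : Fin n × Fin n | p.1 < p.2 ∧ v p.2 < v p.1}
      {q : Fin n × Fin n | q ∉ grInt v Fin.revPerm} := by
    refine ⟨?_, ?_, ?_⟩
    · rintro ⟨a, b⟩ ⟨hab, hv⟩
      exact hmaps a b hab hv
    · rintro ⟨a, b⟩ ⟨hab, hv⟩ ⟨a', b'⟩ ⟨hab', hv'⟩ heq
      simp only [Prod.mk.injEq] at heq
      exact Prod.ext (v.injective heq.2) heq.1
    · rintro ⟨r, c⟩ hq
      obtain ⟨h1', h2'⟩ := hsurj r c hq
      refine ⟨(v.symm c, r), ⟨h1', ?_⟩, ?_⟩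
      · simpa using h2'
      · simp
  refine ⟨hbij, ?_⟩
  have hinj : Set.InjOn (fun p : Fin n × Fin n => (p.2, v p.1))
      ↑(Finset.univ.filter fun p : Fin n × Fin n => p.1 < p.2 ∧ v p.2 < v p.1) := by
    apply hbij.injOn.mono
    intro p hp
    simp only [Finset.coe_filter, Set.mem_setOf_eq, Finset.mem_univ, true_and] at hp ⊢
    exact hp
  have himage : (Finset.univ.filter fun q : Fin n × Fin n => q ∉ grInt v Fin.revPerm) =
      (Finset.univ.filter fun p : Fin n × Fin n => p.1 < p.2 ∧ v p.2 < v p.1).image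
        (fun p => (p.2, v p.1)) := by
    ext q
    obtain ⟨r, c⟩ := q
    simp only [Finset.mem_filter, Finset.mem_univ, true_and, Finset.mem_image]
    constructor
    · intro hq
      obtain ⟨h1', h2'⟩ := hsurj r c hq
      refine ⟨(v.symm c, r), ?_, by simp⟩
      simp only [Finset.mem_filter, Finset.mem_univ, true_and]
      exact ⟨h1', by simpa using h2'⟩
    · rintro ⟨⟨a, b⟩, hmem, heq⟩
      simp only [Finset.mem_filter, Finset.mem_univ, true_and] at hmem
      simp only [Prod.mk.injEq] at heq
      obtain ⟨rfl, rfl⟩ : r = b ∧ c = v a := ⟨heq.1.symm, heq.2.symm⟩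
      exact hmaps a r hmem.1 hmem.2
  rw [himage, Finset.card_image_of_injOn hinj]
  rfl
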